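/- Fix k ∈ ℝ^d and let Λ be a real p×d matrix with full rank d. Then the map f(Λ) = det(ΛᵀΛ)^{1/d} · kᵀ(ΛᵀΛ)^{−1}k is Fréchet differentiable at every full-rank Λ with gradient g^{(k)}(Λ) = 2 det(ΛᵀΛ)^{1/d} Λ (ΛᵀΛ)^{−1} [ (1/d)(kᵀ(ΛᵀΛ)^{−1}k) I_d − k kᵀ (ΛᵀΛ)^{−1} ]; that is, the derivative is the linear map H ↦ tr(g^{(k)}(Λ)ᵀ H). -/

import Mathlib

open Matrix Real

attribute [local instance] Matrix.normedAddCommGroup Matrix.normedSpace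

/-- The continuous linear map `H ↦ tr(Gᵀ H)`, representing the gradient `G`. -/
noncomputable def gradCLM {p d : ℕ} (G : Matrix (Fin p) (Fin d) ℝ) :
    Matrix (Fin p) (Fin d) ℝ →L[ℝ] ℝ :=
  LinearMap.toContinuousLinearMap
    { toFun := fun H => (Gᵀ * H).trace
      map_add' := fun H₁ H₂ => by simp [Matrix.mul_add]
      map_smul' := fun c H => by simp [Matrix.mul_smul] }

/-- The gradient matrix `g^{(k)}(Λ)`. -/
noncomputable def gMat {p d : ℕ} (k : Fin d → ℝ) (Λ : Matrix (Fin p) (Fin d) ℝ) :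
    Matrix (Fin p) (Fin d) ℝ :=
  (2 * (Λᵀ * Λ).det ^ ((1 : ℝ) / d)) •
    (Λ * (Λᵀ * Λ)⁻¹ *
      (((k ⬝ᵥ ((Λᵀ * Λ)⁻¹ *ᵥ k)) / d) • (1 : Matrix (Fin d) (Fin d) ℝ) -
        Matrix.vecMulVec k k * (Λᵀ * Λ)⁻¹))

lemma gradCLM_apply {p d : ℕ} (G H : Matrix (Fin p) (Fin d) ℝ) :
    gradCLM G H = (Gᵀ * H).trace := by
  simp [gradCLM]

noncomputable def detCMM (d : ℕ) :
    ContinuousMultilinearMap ℝ (fun _ : Fin d => (Fin d → ℝ)) ℝ :=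
  MultilinearMap.mkContinuous
    (Matrix.detRowAlternating : (Fin d → ℝ) [⋀^Fin d]→ₗ[ℝ] ℝ).toMultilinearMap
    (d.factorial) (fun m => by
      have h1 : (Matrix.detRowAlternating (R := ℝ) (n := Fin d)).toMultilinearMap m
          = Matrix.det (Matrix.of m) := rfl
      rw [h1, Matrix.det_apply]
      calc ‖∑ σ : Equiv.Perm (Fin d), Equiv.Perm.sign σ • ∏ i, Matrix.of m (σ i) i‖
          ≤ ∑ σ : Equiv.Perm (Fin d), ‖Equiv.Perm.sign σ • ∏ i, Matrix.of m (σ i) i‖ :=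
            norm_sum_le _ _
        _ ≤ ∑ _σ : Equiv.Perm (Fin d), ∏ i, ‖m i‖ := by
            refine Finset.sum_le_sum fun σ _ => ?_
            have h2 : ‖Equiv.Perm.sign σ • ∏ i, Matrix.of m (σ i) i‖
                = ‖∏ i, Matrix.of m (σ i) i‖ := by
              rcases Int.units_eq_one_or (Equiv.Perm.sign σ) with h | h <;> simp [h]
            rw [h2]
            have h3 : ‖∏ i, Matrix.of m (σ i) i‖ ≤ ∏ i, ‖m (σ i)‖ := by
              rw [norm_prod]
              exact Finset.prod_le_prod (fun i _ => norm_nonneg _)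
                (fun i _ => norm_le_pi_norm (m (σ i)) i)
            calc ‖∏ i, Matrix.of m (σ i) i‖ ≤ ∏ i, ‖m (σ i)‖ := h3
              _ = ∏ i, ‖m i‖ := Equiv.prod_comp σ (fun i => ‖m i‖)
        _ = (d.factorial : ℝ) * ∏ i, ‖m i‖ := by
            rw [Finset.sum_const, Finset.card_univ, Fintype.card_perm, Fintype.card_fin,
              nsmul_eq_mul]
      )

lemma detCMM_apply {d : ℕ} (M : Matrix (Fin d) (Fin d) ℝ) : detCMM d M = M.det := rfl
theorem hasFDerivAt_det {d : ℕ} (M : Matrix (Fin d) (Fin d) ℝ) :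
    HasFDerivAt Matrix.det (gradCLM ((M.adjugate)ᵀ)) M := by
  have h := (detCMM d).hasFDerivAt M
  have hfun : ⇑(detCMM d) = (Matrix.det : Matrix (Fin d) (Fin d) ℝ → ℝ) := rfl
  rw [hfun] at h
  have hD : (detCMM d).linearDeriv M = gradCLM ((M.adjugate)ᵀ) := by
    refine ContinuousLinearMap.ext fun (H : Matrix (Fin d) (Fin d) ℝ) => ?_
    refine (ContinuousMultilinearMap.linearDeriv_apply _ _ _).trans
      (Eq.trans ?_ (gradCLM_apply ((M.adjugate)ᵀ) H).symm)
    have key : ∀ i, (detCMM d) (Function.update M i (H i))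
        = ((M.adjugate)ᵀ *ᵥ (H i)) i := by
      intro i
      have h1 : Function.update M i (H i) = M.updateRow i (H i) := rfl
      rw [h1, detCMM_apply, ← Matrix.det_transpose, ← Matrix.updateCol_transpose,
        ← Matrix.cramer_apply, Matrix.cramer_eq_adjugate_mulVec, Matrix.adjugate_transpose]
    simp_rw [key]
    simp [Matrix.trace, Matrix.mul_apply, Matrix.mulVec, dotProduct, Matrix.diag]
    rw [Finset.sum_comm]
  rw [hD] at h
  exact h

section Bilin
variable {X E F G : Type*} [NormedAddCommGroup X] [NormedSpace ℝ X]
  [NormedAddCommGroup E] [NormedSpace ℝ E] [NormedAddCommGroup F] [NormedSpace ℝ F]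
  [NormedAddCommGroup G] [NormedSpace ℝ G] [FiniteDimensional ℝ E] [FiniteDimensional ℝ F]

noncomputable def toCLM2 (b : E →ₗ[ℝ] F →ₗ[ℝ] G) : E →L[ℝ] F →L[ℝ] G :=
  LinearMap.toContinuousLinearMap
    ((LinearMap.toContinuousLinearMap :
      (F →ₗ[ℝ] G) ≃ₗ[ℝ] (F →L[ℝ] G)).toLinearMap.comp b)

lemma toCLM2_apply (b : E →ₗ[ℝ] F →ₗ[ℝ] G) (x : E) (y : F) :
    toCLM2 b x y = b x y := by
  simp [toCLM2]

lemma hasFDerivAt_bilin (b : E →ₗ[ℝ] F →ₗ[ℝ] G) {f : X → E} {g : X → F}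
    {f' : X →L[ℝ] E} {g' : X →L[ℝ] F} {x : X}
    (hf : HasFDerivAt f f' x) (hg : HasFDerivAt g g' x) :
    HasFDerivAt (fun y => b (f y) (g y))
      (((toCLM2 b (f x)).comp g') + (((toCLM2 b).flip (g x)).comp f')) x := by
  have h := ((toCLM2 b).isBoundedBilinearMap.hasFDerivAt (f x, g x)).comp x (hf.prodMk hg)
  have hfun : (fun y => b (f y) (g y))
      = (fun q : E × F => toCLM2 b q.1 q.2) ∘ (fun y => (f y, g y)) := by
    funext y; simp [toCLM2_apply]
  rw [hfun]
  convert h using 1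
  ext v; simp [IsBoundedBilinearMap.deriv_apply, toCLM2_apply]

end Bilin

noncomputable def bQ (p d : ℕ) : Matrix (Fin p) (Fin d) ℝ →ₗ[ℝ]
    Matrix (Fin p) (Fin d) ℝ →ₗ[ℝ] Matrix (Fin d) (Fin d) ℝ :=
  LinearMap.mk₂ ℝ (fun X Y => Xᵀ * Y)
    (fun X X' Y => by simp [Matrix.transpose_add, Matrix.add_mul])
    (fun c X Y => by simp [Matrix.transpose_smul, Matrix.smul_mul])
    (fun X Y Y' => by simp [Matrix.mul_add])
    (fun c X Y => by simp [Matrix.mul_smul])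

noncomputable def bMV (d : ℕ) : Matrix (Fin d) (Fin d) ℝ →ₗ[ℝ]
    (Fin d → ℝ) →ₗ[ℝ] (Fin d → ℝ) :=
  LinearMap.mk₂ ℝ (fun A v => A *ᵥ v)
    (fun A B v => by simp [Matrix.add_mulVec])
    (fun c A v => by simp [Matrix.smul_mulVec])
    (fun A v w => by simp [Matrix.mulVec_add])
    (fun c A v => by simp [Matrix.mulVec_smul])

noncomputable def dotCLM {d : ℕ} (k : Fin d → ℝ) : (Fin d → ℝ) →L[ℝ] ℝ :=
  LinearMap.toContinuousLinearMap
    { toFun := fun v => k ⬝ᵥ v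
      map_add' := fun v w => by simp [dotProduct_add]
      map_smul' := fun c v => by simp [dotProduct_smul] }

lemma dotCLM_apply {d : ℕ} (k v : Fin d → ℝ) : dotCLM k v = k ⬝ᵥ v := by
  simp [dotCLM]

lemma differentiableAt_updateColumn {d : ℕ} (i : Fin d) (k : Fin d → ℝ)
    (A₀ : Matrix (Fin d) (Fin d) ℝ) :
    DifferentiableAt ℝ (fun A : Matrix (Fin d) (Fin d) ℝ => A.updateCol i k) A₀ := by
  set ℓ : Matrix (Fin d) (Fin d) ℝ →ₗ[ℝ] Matrix (Fin d) (Fin d) ℝ :=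
    { toFun := fun A => A.updateCol i 0
      map_add' := fun A B => by
        ext r s; by_cases h : s = i <;> simp [Matrix.updateCol_apply, h]
      map_smul' := fun c A => by
        ext r s; by_cases h : s = i <;> simp [Matrix.updateCol_apply, h] } with hℓ
  have heq : (fun A : Matrix (Fin d) (Fin d) ℝ => A.updateCol i k)
      = fun A => ℓ A + (0 : Matrix (Fin d) (Fin d) ℝ).updateCol i k := by
    funext A; ext r s
    by_cases h : s = i <;> simp [hℓ, Matrix.updateCol_apply, h]
  rw [heq]
  exact ((LinearMap.toContinuousLinearMap ℓ).differentiableAt).add_const _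

lemma det_pos_of_rank {p d : ℕ} (Λ : Matrix (Fin p) (Fin d) ℝ) (hΛ : Λ.rank = d) :
    0 < (Λᵀ * Λ).det := by
  have hker : LinearMap.ker Λ.mulVecLin = ⊥ := by
    have h1 := LinearMap.finrank_range_add_finrank_ker Λ.mulVecLin
    rw [Module.finrank_fin_fun] at h1
    have h2 : Module.finrank ℝ (LinearMap.range Λ.mulVecLin) = d := hΛ
    rw [h2] at h1
    have h3 : Module.finrank ℝ (LinearMap.ker Λ.mulVecLin) = 0 := by omega
    exact Submodule.finrank_eq_zero.mp h3
  have hPD : (Λᵀ * Λ).PosDef := by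
    refine Matrix.posDef_iff_dotProduct_mulVec.mpr ⟨?_, ?_⟩
    · simpa using Matrix.isHermitian_conjTranspose_mul_self Λ
    · intro x hx
      have hx0 : Λ *ᵥ x ≠ 0 := by
        intro h0
        apply hx
        have : x ∈ LinearMap.ker Λ.mulVecLin := by
          simpa [Matrix.mulVecLin_apply] using h0
        simpa [hker] using this
      have heq : star x ⬝ᵥ ((Λᵀ * Λ) *ᵥ x) = (Λ *ᵥ x) ⬝ᵥ (Λ *ᵥ x) := by
        rw [star_trivial, ← Matrix.mulVec_mulVec, dotProduct_mulVec,
          Matrix.vecMul_transpose]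
      rw [heq]
      have hnn : 0 ≤ (Λ *ᵥ x) ⬝ᵥ (Λ *ᵥ x) :=
        Finset.sum_nonneg fun j _ => mul_self_nonneg _
      rcases lt_or_eq_of_le hnn with h | h
      · exact h
      · exact absurd (dotProduct_self_eq_zero.mp h.symm) hx0
  exact hPD.det_pos

lemma dot_mulVec_symm {m n : Type*} [Fintype m] [Fintype n]
    (a : m → ℝ) (b : n → ℝ) (B : Matrix m n ℝ) :
    a ⬝ᵥ (B *ᵥ b) = b ⬝ᵥ (Bᵀ *ᵥ a) := by
  rw [dotProduct_mulVec, dotProduct_comm, Matrix.mulVec_transpose]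

lemma trace_conjsym {p d : ℕ} (N : Matrix (Fin d) (Fin d) ℝ) (hs : Nᵀ = N)
    (A B : Matrix (Fin p) (Fin d) ℝ) :
    (N * (Aᵀ * B)).trace = (N * (Bᵀ * A)).trace := by
  conv_lhs => rw [← Matrix.trace_transpose]
  rw [Matrix.transpose_mul, Matrix.transpose_mul, Matrix.transpose_transpose, hs,
    Matrix.trace_mul_comm]

lemma mul_vecMulVec' {d : ℕ} (N : Matrix (Fin d) (Fin d) ℝ) (a b : Fin d → ℝ) :
    N * Matrix.vecMulVec a b = Matrix.vecMulVec (N *ᵥ a) b := by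
  ext i j
  simp only [Matrix.mul_apply, Matrix.vecMulVec_apply, Matrix.mulVec, dotProduct,
    Finset.sum_mul]
  exact Finset.sum_congr rfl fun x _ => by ring

lemma vecMulVec_mul' {d : ℕ} (a b : Fin d → ℝ) (N : Matrix (Fin d) (Fin d) ℝ) :
    Matrix.vecMulVec a b * N = Matrix.vecMulVec a (Matrix.vecMul b N) := by
  ext i j
  simp only [Matrix.mul_apply, Matrix.vecMulVec_apply, Matrix.vecMul, dotProduct,
    Finset.mul_sum]
  exact Finset.sum_congr rfl fun x _ => by ring

lemma NKN {d : ℕ} (N : Matrix (Fin d) (Fin d) ℝ) (hs : Nᵀ = N) (kk : Fin d → ℝ) :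
    N * Matrix.vecMulVec kk kk * N = Matrix.vecMulVec (N *ᵥ kk) (N *ᵥ kk) := by
  rw [mul_vecMulVec', vecMulVec_mul', ← Matrix.mulVec_transpose, hs]

lemma trOuter {d : ℕ} (u : Fin d → ℝ) (X : Matrix (Fin d) (Fin d) ℝ) :
    (Matrix.vecMulVec u u * X).trace = u ⬝ᵥ (X *ᵥ u) := by
  have h1 : (Matrix.vecMulVec u u * X).trace = ∑ i, ∑ j, u i * u j * X j i := by
    simp only [Matrix.trace, Matrix.diag, Matrix.mul_apply, Matrix.vecMulVec_apply]
  have h2 : u ⬝ᵥ (X *ᵥ u) = ∑ i, ∑ j, u i * (X i j * u j) := by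
    simp only [dotProduct, Matrix.mulVec, Finset.mul_sum]
  rw [h1, h2,
    show (∑ i, ∑ j, u i * u j * X j i) = ∑ j, ∑ i, u i * u j * X j i from Finset.sum_comm]
  exact Finset.sum_congr rfl fun a _ => Finset.sum_congr rfl fun b _ => by ring

lemma vecMulVec_transpose' {d : ℕ} (a b : Fin d → ℝ) :
    (Matrix.vecMulVec a b)ᵀ = Matrix.vecMulVec b a := by
  ext i j; simp [Matrix.vecMulVec_apply, mul_comm]

lemma trNKNX {d : ℕ} (N : Matrix (Fin d) (Fin d) ℝ) (hs : Nᵀ = N) (kk : Fin d → ℝ)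
    (X : Matrix (Fin d) (Fin d) ℝ) :
    (N * (Matrix.vecMulVec kk kk * (N * X))).trace = (N *ᵥ kk) ⬝ᵥ (X *ᵥ (N *ᵥ kk)) := by
  rw [← Matrix.mul_assoc, ← Matrix.mul_assoc, NKN N hs kk, trOuter]

lemma traceLHS {p d : ℕ} (Λ H : Matrix (Fin p) (Fin d) ℝ) (N : Matrix (Fin d) (Fin d) ℝ)
    (hs : Nᵀ = N) (c : ℝ) (kk : Fin d → ℝ) :
    ((Λ * N * (c • (1 : Matrix (Fin d) (Fin d) ℝ) - Matrix.vecMulVec kk kk * N))ᵀ * H).trace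
      = c * (N * (Λᵀ * H)).trace - (N *ᵥ kk) ⬝ᵥ ((Λᵀ * H) *ᵥ (N *ᵥ kk)) := by
  simp only [Matrix.transpose_mul, Matrix.transpose_sub, Matrix.transpose_smul,
    Matrix.transpose_one, hs, vecMulVec_transpose', Matrix.sub_mul, Matrix.smul_mul,
    Matrix.one_mul, Matrix.trace_sub, Matrix.trace_smul, smul_eq_mul, Matrix.mul_assoc,
    trNKNX N hs kk]



theorem stmt12 (p d : ℕ) (hd : 1 ≤ d) (hdp : d ≤ p)
    (k : Fin d → ℝ)
    (Λ : Matrix (Fin p) (Fin d) ℝ) (hΛ : Λ.rank = d) :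
    HasFDerivAt
      (fun L : Matrix (Fin p) (Fin d) ℝ =>
        (Lᵀ * L).det ^ ((1 : ℝ) / d) * (k ⬝ᵥ ((Lᵀ * L)⁻¹ *ᵥ k)))
      (gradCLM (gMat k Λ)) Λ := by
  classical
  have hdR : (d : ℝ) ≠ 0 := Nat.cast_ne_zero.mpr (by omega)
  set M : Matrix (Fin d) (Fin d) ℝ := Λᵀ * Λ with hM
  have hα : 0 < M.det := det_pos_of_rank Λ hΛ
  have hMsymm : Mᵀ = M := by rw [hM, Matrix.transpose_mul, Matrix.transpose_transpose]
  set N : Matrix (Fin d) (Fin d) ℝ := M⁻¹ with hN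
  have hNsymm : Nᵀ = N := by rw [hN, Matrix.transpose_nonsing_inv, hMsymm]
  set u : Fin d → ℝ := N *ᵥ k with hu
  -- derivative of L ↦ Lᵀ * L
  set QD : Matrix (Fin p) (Fin d) ℝ →L[ℝ] Matrix (Fin d) (Fin d) ℝ :=
    ((toCLM2 (bQ p d) Λ).comp (ContinuousLinearMap.id ℝ _)) +
      (((toCLM2 (bQ p d)).flip Λ).comp (ContinuousLinearMap.id ℝ _)) with hQD
  have hQ : HasFDerivAt (fun L : Matrix (Fin p) (Fin d) ℝ => Lᵀ * L) QD Λ :=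
    hasFDerivAt_bilin (bQ p d) (hasFDerivAt_id Λ) (hasFDerivAt_id Λ)
  have hQDapply : ∀ H, QD H = Λᵀ * H + Hᵀ * Λ := fun H => by
    change (toCLM2 (bQ p d) Λ) H + ((toCLM2 (bQ p d)).flip Λ) H = _
    simp [toCLM2_apply, bQ]
  -- derivative of det
  have hdet : HasFDerivAt (fun L : Matrix (Fin p) (Fin d) ℝ => (Lᵀ * L).det)
      ((gradCLM ((M.adjugate)ᵀ)).comp QD) Λ := (hasFDerivAt_det M).comp Λ hQ
  have hrpow := Real.hasDerivAt_rpow_const (x := M.det) (p := (1:ℝ)/d) (Or.inl hα.ne')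
  have ha : HasFDerivAt (fun L : Matrix (Fin p) (Fin d) ℝ => ((Lᵀ * L).det) ^ ((1:ℝ)/d))
      ((((1:ℝ)/d * M.det ^ ((1:ℝ)/d - 1))) • ((gradCLM ((M.adjugate)ᵀ)).comp QD)) Λ :=
    by have h := hrpow.comp_hasFDerivAt Λ hdet; exact h
  -- differentiability of w
  have hw : DifferentiableAt ℝ (fun L : Matrix (Fin p) (Fin d) ℝ => (Lᵀ * L)⁻¹ *ᵥ k) Λ := by
    have heq : (fun L : Matrix (Fin p) (Fin d) ℝ => (Lᵀ * L)⁻¹ *ᵥ k)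
        = fun L => ((Lᵀ * L).det)⁻¹ • ((Lᵀ * L).cramer k) := by
      funext L
      rw [Matrix.inv_def, Matrix.smul_mulVec, ← Matrix.cramer_eq_adjugate_mulVec,
        Ring.inverse_eq_inv']
    rw [heq]
    refine DifferentiableAt.smul (DifferentiableAt.inv hdet.differentiableAt hα.ne') ?_
    refine differentiableAt_pi.mpr fun i => ?_
    have hci : (fun L : Matrix (Fin p) (Fin d) ℝ => (Lᵀ * L).cramer k i)
        = fun L => ((Lᵀ * L).updateCol i k).det := by
      funext L; rw [Matrix.cramer_apply]
    rw [hci]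
    exact ((hasFDerivAt_det _).differentiableAt).comp
      (f := fun L : Matrix (Fin p) (Fin d) ℝ => (Lᵀ * L).updateCol i k) Λ
      ((differentiableAt_updateColumn i k M).comp
        (f := fun L : Matrix (Fin p) (Fin d) ℝ => Lᵀ * L) Λ hQ.differentiableAt)
  set W' := fderiv ℝ (fun L : Matrix (Fin p) (Fin d) ℝ => (Lᵀ * L)⁻¹ *ᵥ k) Λ with hW'def
  have hw' : HasFDerivAt (fun L : Matrix (Fin p) (Fin d) ℝ => (Lᵀ * L)⁻¹ *ᵥ k) W' Λ :=
    hw.hasFDerivAt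
  -- implicit differentiation
  have hev : (fun L : Matrix (Fin p) (Fin d) ℝ => (Lᵀ * L) *ᵥ ((Lᵀ * L)⁻¹ *ᵥ k))
      =ᶠ[nhds Λ] fun _ => k := by
    have h0 : ∀ᶠ L : Matrix (Fin p) (Fin d) ℝ in nhds Λ, ((Lᵀ * L).det) ≠ 0 :=
      hdet.differentiableAt.continuousAt.eventually_ne hα.ne'
    filter_upwards [h0] with L hL
    rw [Matrix.mulVec_mulVec, Matrix.mul_nonsing_inv _ (isUnit_iff_ne_zero.mpr hL),
      Matrix.one_mulVec]
  have hg : HasFDerivAt (fun L : Matrix (Fin p) (Fin d) ℝ => (Lᵀ * L) *ᵥ ((Lᵀ * L)⁻¹ *ᵥ k))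
      (((toCLM2 (bMV d) M).comp W') + (((toCLM2 (bMV d)).flip (N *ᵥ k)).comp QD)) Λ :=
    hasFDerivAt_bilin (bMV d) hQ hw'
  have hDzero : (((toCLM2 (bMV d) M).comp W') + (((toCLM2 (bMV d)).flip (N *ᵥ k)).comp QD))
      = 0 :=
    (hg.congr_of_eventuallyEq hev.symm).unique (hasFDerivAt_const k Λ)
  have hW'app : ∀ H, W' H = -(N *ᵥ (QD H *ᵥ u)) := by
    intro H
    have h1 := ContinuousLinearMap.ext_iff.mp hDzero H
    simp only [ContinuousLinearMap.add_apply, ContinuousLinearMap.comp_apply,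
      ContinuousLinearMap.zero_apply, ContinuousLinearMap.flip_apply, toCLM2_apply] at h1
    have h2 : M *ᵥ (W' H) + QD H *ᵥ u = 0 := by
      have h1' : M *ᵥ (W' H) + toCLM2 (bMV d) (QD H) (N *ᵥ k) = 0 := h1
      simpa only [bMV, LinearMap.mk₂_apply, toCLM2_apply] using h1'
    have h3 : M *ᵥ (W' H) = -(QD H *ᵥ u) := eq_neg_of_add_eq_zero_left h2
    have h4 := congrArg (fun v => N *ᵥ v) h3
    simpa [Matrix.mulVec_mulVec, hN, Matrix.nonsing_inv_mul M (isUnit_iff_ne_zero.mpr hα.ne'),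
      Matrix.one_mulVec, Matrix.mulVec_neg] using h4
  have hb : HasFDerivAt (fun L : Matrix (Fin p) (Fin d) ℝ => k ⬝ᵥ ((Lᵀ * L)⁻¹ *ᵥ k))
      ((dotCLM k).comp W') Λ := (dotCLM k).hasFDerivAt.comp Λ hw'
  have hfinal := ha.mul hb
  have hkey : gradCLM (gMat k Λ) =
      (M.det ^ ((1:ℝ)/d)) • ((dotCLM k).comp W') +
        (k ⬝ᵥ ((Λᵀ * Λ)⁻¹ *ᵥ k)) •
          ((((1:ℝ)/d * M.det ^ ((1:ℝ)/d - 1))) • ((gradCLM ((M.adjugate)ᵀ)).comp QD)) := by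
    refine ContinuousLinearMap.ext fun H => ?_
    rw [gradCLM_apply]
    simp only [ContinuousLinearMap.add_apply, ContinuousLinearMap.smul_apply,
      ContinuousLinearMap.comp_apply, dotCLM_apply, gradCLM_apply, hW'app H, hQDapply H,
      smul_eq_mul]
    have hadj : M.adjugate = M.det • N := by
      have h6 : M⁻¹ = (M.det)⁻¹ • M.adjugate := by rw [Matrix.inv_def, Ring.inverse_eq_inv']
      rw [hN, h6, smul_smul, mul_inv_cancel₀ hα.ne', one_smul]
    have e1 : k ⬝ᵥ -(N *ᵥ (Λᵀ * H + Hᵀ * Λ) *ᵥ u) = -(2 * (u ⬝ᵥ ((Λᵀ * H) *ᵥ u))) := by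
      rw [dotProduct_neg, dot_mulVec_symm k _ N, hNsymm, ← hu,
        dotProduct_comm, Matrix.add_mulVec, dotProduct_add,
        show u ⬝ᵥ ((Hᵀ * Λ) *ᵥ u) = u ⬝ᵥ ((Λᵀ * H) *ᵥ u) from by
          rw [dot_mulVec_symm, Matrix.transpose_mul, Matrix.transpose_transpose]]
      ring
    have e2 : (M.adjugateᵀᵀ * (Λᵀ * H + Hᵀ * Λ)).trace
        = M.det * (2 * (N * (Λᵀ * H)).trace) := by
      rw [Matrix.transpose_transpose, hadj, Matrix.smul_mul, Matrix.trace_smul, smul_eq_mul,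
        Matrix.mul_add, Matrix.trace_add, trace_conjsym N hNsymm H Λ]
      ring
    have e3 : ((gMat k Λ)ᵀ * H).trace
        = 2 * M.det ^ ((1:ℝ)/d) *
          ((k ⬝ᵥ u / d) * (N * (Λᵀ * H)).trace - u ⬝ᵥ ((Λᵀ * H) *ᵥ u)) := by
      have hg4 : gMat k Λ = (2 * M.det ^ ((1:ℝ)/d)) •
          (Λ * N * ((k ⬝ᵥ u / d) • (1 : Matrix (Fin d) (Fin d) ℝ) -
            Matrix.vecMulVec k k * N)) := by
        simp only [gMat, ← hM, ← hN, ← hu]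
      rw [hg4, Matrix.transpose_smul, Matrix.smul_mul, Matrix.trace_smul, smul_eq_mul,
        traceLHS Λ H N hNsymm _ k, ← hu]
    rw [e3, e1, e2]
    have hrel : M.det ^ ((1:ℝ)/d - 1) * M.det = M.det ^ ((1:ℝ)/d) := by
      rw [Real.rpow_sub hα, Real.rpow_one, div_mul_cancel₀ _ hα.ne']
    linear_combination (-(2 * (k ⬝ᵥ u) * ((N * (Λᵀ * H)).trace) / (d : ℝ))) * hrel
  rw [hkey]
  exact hfinal
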